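/- Let 𝒰 be a unitary system with a complete wandering vector ψ. Then the set of complete wandering vectors for 𝒰 equals {Uψ : U a unitary operator in C_ψ(𝒰)}, and the correspondence U ↦ Uψ is one-to-one. -/

import Mathlib

variable {H : Type*} [NormedAddCommGroup H] [InnerProductSpace ℂ H] [CompleteSpace H]

/-- `ψ` is a complete wandering vector for the unitary system `𝒰`:
`{Uψ : U ∈ 𝒰}` is an orthonormal basis of `H`. -/
def IsCompleteWandering (𝒰 : Set (H →L[ℂ] H)) (ψ : H) : Prop :=
  Orthonormal ℂ (fun U : 𝒰 => (U : H →L[ℂ] H) ψ) ∧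
    (Submodule.span ℂ ((fun U : H →L[ℂ] H => U ψ) '' 𝒰)).topologicalClosure = ⊤

/-- The local commutant of `𝒰` at `ψ`. -/
def localCommutant (𝒰 : Set (H →L[ℂ] H)) (ψ : H) : Set (H →L[ℂ] H) :=
  {A : H →L[ℂ] H | ∀ U ∈ 𝒰, (A * U - U * A) ψ = 0}

lemma localCommutant.apply_apply {𝒰 : Set (H →L[ℂ] H)} {ψ : H} {A : H →L[ℂ] H}
    (hA : A ∈ localCommutant 𝒰 ψ) {W : H →L[ℂ] H} (hW : W ∈ 𝒰) :
    A (W ψ) = W (A ψ) := by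
  have := hA W hW
  rw [ContinuousLinearMap.sub_apply, sub_eq_zero] at this
  simpa using this

/-- For a unitary system `𝒰` with complete wandering vector `ψ`, the complete wandering
vectors are exactly the vectors `Uψ` with `U` a unitary in the local commutant `C_ψ(𝒰)`,
and the correspondence `U ↦ Uψ` is one-to-one. -/
theorem stmt_4 (𝒰 : Set (H →L[ℂ] H)) (h1 : (1 : H →L[ℂ] H) ∈ 𝒰)
    (hunit : ∀ W ∈ 𝒰, W ∈ unitary (H →L[ℂ] H))
    (ψ : H) (hψ : IsCompleteWandering 𝒰 ψ) :
    ({η : H | IsCompleteWandering 𝒰 η} =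
      {η : H | ∃ U : H →L[ℂ] H, U ∈ unitary (H →L[ℂ] H) ∧ U ∈ localCommutant 𝒰 ψ ∧ U ψ = η}) ∧
    (∀ U V : H →L[ℂ] H, U ∈ unitary (H →L[ℂ] H) → V ∈ unitary (H →L[ℂ] H) →
      U ∈ localCommutant 𝒰 ψ → V ∈ localCommutant 𝒰 ψ → U ψ = V ψ → U = V) := by
  classical
  have hrange : Set.range (fun U : 𝒰 => (U : H →L[ℂ] H) ψ) =
      (fun U : H →L[ℂ] H => U ψ) '' 𝒰 := (Set.image_eq_range (fun U : H →L[ℂ] H => U _) 𝒰).symm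
  have hdense : Dense ((Submodule.span ℂ ((fun U : H →L[ℂ] H => U ψ) '' 𝒰)) : Set H) :=
    Submodule.dense_iff_topologicalClosure_eq_top.mpr hψ.2
  constructor
  · ext η
    simp only [Set.mem_setOf_eq]
    constructor
    · rintro hη
      -- build Hilbert bases
      have hrangeη : Set.range (fun U : 𝒰 => (U : H →L[ℂ] H) η) =
          (fun U : H →L[ℂ] H => U η) '' 𝒰 := (Set.image_eq_range (fun U : H →L[ℂ] H => U _) 𝒰).symm
      let b : HilbertBasis 𝒰 ℂ H := HilbertBasis.mk hψ.1 (by rw [hrange, hψ.2])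
      let c : HilbertBasis 𝒰 ℂ H := HilbertBasis.mk hη.1 (by rw [hrangeη, hη.2])
      let e : H ≃ₗᵢ[ℂ] H := b.repr.trans c.repr.symm
      have he : ∀ i : 𝒰, e (b i) = c i := by
        intro i
        show c.repr.symm (b.repr (b i)) = c i
        rw [HilbertBasis.repr_self, HilbertBasis.repr_symm_single]
      have hb : ∀ i : 𝒰, b i = (i : H →L[ℂ] H) ψ := fun i =>
        congrFun (HilbertBasis.coe_mk _ _) i
      have hc : ∀ i : 𝒰, c i = (i : H →L[ℂ] H) η := fun i =>
        congrFun (HilbertBasis.coe_mk _ _) i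
      refine ⟨(e : H →L[ℂ] H), ?_, ?_, ?_⟩
      · exact (Unitary.linearIsometryEquiv.symm e).property
      · intro W hW
        rw [ContinuousLinearMap.sub_apply, sub_eq_zero]
        have h1' : (e : H →L[ℂ] H) ψ = η := by
          have := he ⟨1, h1⟩
          rw [hb, hc] at this
          simpa using this
        have := he ⟨W, hW⟩
        rw [hb, hc] at this
        simp only [ContinuousLinearMap.mul_apply, ContinuousLinearMap.coe_coe, h1']
        exact this
      · have := he ⟨1, h1⟩
        rw [hb, hc] at this
        simpa using this
    · rintro ⟨U, hU, hUc, rfl⟩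
      constructor
      · have : (fun W : 𝒰 => (W : H →L[ℂ] H) (U ψ)) =
            (fun W : 𝒰 => U ((W : H →L[ℂ] H) ψ)) := by
          funext W
          exact (localCommutant.apply_apply hUc W.2).symm
        rw [this]
        refine ⟨fun i => ?_, fun i j hij => ?_⟩
        · show ‖U ((i : H →L[ℂ] H) ψ)‖ = 1
          rw [ContinuousLinearMap.norm_map_of_mem_unitary hU]
          exact hψ.1.1 i
        · show inner ℂ (U ((i : H →L[ℂ] H) ψ)) (U ((j : H →L[ℂ] H) ψ)) = (0 : ℂ)
          rw [ContinuousLinearMap.inner_map_map_of_mem_unitary hU]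
          exact hψ.1.2 hij
      · -- density via image under the unitary e
        set e : H ≃ₗᵢ[ℂ] H := Unitary.linearIsometryEquiv ⟨U, hU⟩ with he
        have heU : (e : H → H) = U := rfl
        have himg : (fun W : H →L[ℂ] H => W (U ψ)) '' 𝒰 =
            U '' ((fun W : H →L[ℂ] H => W ψ) '' 𝒰) := by
          rw [Set.image_image]
          exact Set.image_congr fun W hW => (localCommutant.apply_apply hUc hW).symm
        have hspan : Submodule.span ℂ (⇑e '' ((fun W : H →L[ℂ] H => W ψ) '' 𝒰)) =
            Submodule.map (e.toLinearEquiv : H →ₗ[ℂ] H)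
              (Submodule.span ℂ ((fun W : H →L[ℂ] H => W ψ) '' 𝒰)) := by
          rw [Submodule.map_span]
          rfl
        rw [himg, ← heU, hspan]
        rw [Submodule.topologicalClosure_eq_top_iff]
        rw [Submodule.eq_bot_iff]
        intro x hx
        rw [Submodule.mem_orthogonal] at hx
        have hx' : ∀ y ∈ Submodule.span ℂ ((fun W : H →L[ℂ] H => W ψ) '' 𝒰),
            inner ℂ (e y) x = (0 : ℂ) := fun y hy =>
          hx _ (Submodule.mem_map_of_mem hy)
        have hmem : e.symm x ∈ (Submodule.span ℂ ((fun W : H →L[ℂ] H => W ψ) '' 𝒰))ᗮ := by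
          rw [Submodule.mem_orthogonal]
          intro y hy
          rw [← e.inner_map_map y (e.symm x), e.apply_symm_apply]
          exact hx' y hy
        rw [Submodule.topologicalClosure_eq_top_iff.mp hψ.2, Submodule.mem_bot] at hmem
        have := congrArg e hmem
        rwa [e.apply_symm_apply, map_zero] at this
  · intro U V hU hV hUc hVc hUV
    refine ContinuousLinearMap.ext_on hdense ?_
    rintro x ⟨W, hW, rfl⟩
    rw [localCommutant.apply_apply hUc hW, localCommutant.apply_apply hVc hW, hUV]
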